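/- If Λ is regularly varying with exponent α ∈ (1,2) and slowly varying part L, then κ(x) ~ (Γ(2−α)/(α−1)) x^{α−1} L(x) as x → ∞; equivalently μ(x) ~ (Γ(2−α)/(α−1)) x^{α} L(x). -/

import Mathlib

open MeasureTheory Real Set Filter Topology
open scoped ENNReal

/-- The integrand of `mu`, with its continuous extension `x(x-1)/2` at `p = 0`. -/
noncomputable def muInt (x p : ℝ) : ℝ :=
  if p = 0 then x * (x - 1) / 2
  else (x * p - 1 + (1 - p) ^ x) / p ^ 2

/-- The rate of decrease `μ(x)` of the `Λ`-coalescent. -/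
noncomputable def mu (Λ : Measure ℝ) (x : ℝ) : ℝ :=
  ∫ p in Set.Icc (0:ℝ) 1, muInt x p ∂Λ

/-- The rate of decrease per capita `κ(x) = μ(x)/x`. -/
noncomputable def kappa (Λ : Measure ℝ) (x : ℝ) : ℝ := mu Λ x / x

/-- `T(y) = ∫_{(y,1]} p⁻² Λ(dp)`. -/
noncomputable def T (Λ : Measure ℝ) (y : ℝ) : ℝ :=
  ∫ p in Set.Ioc y 1, 1 / p ^ 2 ∂Λ

/-- `L` is slowly varying at infinity: it is measurable, positive on `(0,∞)`, and
`L(cx)/L(x) → 1` as `x → ∞` for every `c > 0`. -/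
def SlowlyVarying (L : ℝ → ℝ) : Prop :=
  Measurable L ∧ (∀ x : ℝ, 0 < x → 0 < L x) ∧
    ∀ c : ℝ, 0 < c → Tendsto (fun x => L (c * x) / L x) atTop (𝓝 1)

/-- The measure `Λ` is regularly varying with exponent `α` and slowly varying part `L`:
`Λ({0}) = 0` and `∫_{(y,1]} p⁻² Λ(dp) ∼ y^{−α} L(1/y)` as `y ↓ 0`. -/
def RegularlyVarying (Λ : Measure ℝ) (α : ℝ) (L : ℝ → ℝ) : Prop :=
  Λ {0} = 0 ∧ SlowlyVarying L ∧
    Tendsto (fun y => T Λ y / (y ^ (-α) * L (1 / y))) (𝓝[>] (0:ℝ)) (𝓝 1)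

namespace KA

noncomputable def Fq (x q : ℝ) : ℝ := 1 - (1 - q) ^ (x - 1)

noncomputable def Tl (Λ : Measure ℝ) (y : ℝ) : ℝ≥0∞ :=
  ∫⁻ p in Set.Ioc y 1, ENNReal.ofReal (1/p^2) ∂Λ

variable {Λ : Measure ℝ} {x q p y : ℝ}

lemma Fq_cont (hx : 2 ≤ x) : Continuous (Fq x) := by
  have h : Continuous fun q : ℝ => (1 - q) ^ (x - 1) :=
    Continuous.rpow_const (by continuity) (fun q => Or.inr (by linarith))
  exact continuous_const.sub h

lemma Fq_nonneg (hx : 2 ≤ x) (hq0 : 0 ≤ q) (hq1 : q ≤ 1) : 0 ≤ Fq x q := by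
  have : (1 - q) ^ (x - 1) ≤ 1 :=
    Real.rpow_le_one (by linarith) (by linarith) (by linarith)
  simpa [Fq] using this

lemma Fq_le_one (hq1 : q ≤ 1) : Fq x q ≤ 1 := by
  have : (0:ℝ) ≤ (1 - q) ^ (x - 1) := Real.rpow_nonneg (by linarith) _
  simp [Fq]; linarith

lemma Fq_le_mul (hx : 2 ≤ x) (hq1 : q ≤ 1) : Fq x q ≤ (x - 1) * q := by
  have h := one_add_mul_self_le_rpow_one_add (s := -q) (by linarith) (p := x - 1) (by linarith)
  have h2 : 1 + (x-1) * (-q) ≤ (1 - q) ^ (x - 1) := by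
    simpa [sub_eq_add_neg] using h
  simp only [Fq]; linarith

lemma hasDeriv_aux (hx : 2 ≤ x) (hq : q < 1) :
    HasDerivAt (fun q => x * q - 1 + (1 - q) ^ x) (x * Fq x q) q := by
  have h1 : HasDerivAt (fun b : ℝ => b ^ x) (x * (1 - q) ^ (x - 1)) (1 - q) :=
    Real.hasDerivAt_rpow_const (Or.inl (by linarith))
  have h2 : HasDerivAt (fun q : ℝ => 1 - q) (-1) q := by
    simpa using (hasDerivAt_id q).const_sub 1
  have h3 : HasDerivAt (fun q : ℝ => (1 - q) ^ x) (x * (1 - q) ^ (x - 1) * (-1)) q :=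
    h1.comp q h2
  have h4 : HasDerivAt (fun q : ℝ => x * q - 1) x q := by
    simpa using ((hasDerivAt_id q).const_mul x).sub_const 1
  have := h4.add h3
  exact this.congr_deriv (by simp [Fq]; ring)

lemma ftc (hx : 2 ≤ x) (hp0 : 0 < p) (hp1 : p ≤ 1) :
    x * p - 1 + (1 - p) ^ x = ∫ q in (0:ℝ)..p, x * Fq x q := by
  have hcont : ContinuousOn (fun q : ℝ => x * q - 1 + (1 - q) ^ x) (Icc 0 p) := by
    have : Continuous fun q : ℝ => (1 - q) ^ x :=
      Continuous.rpow_const (by continuity) (fun q => Or.inr (by linarith))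
    exact ((continuous_const.mul continuous_id).sub continuous_const).add this |>.continuousOn
  have hderiv : ∀ q ∈ Ioo (0:ℝ) p, HasDerivWithinAt
      (fun q => x * q - 1 + (1 - q) ^ x) (x * Fq x q) (Ioi q) q := by
    intro q hq
    exact (hasDeriv_aux hx (lt_of_lt_of_le hq.2 hp1)).hasDerivWithinAt
  have hint : IntervalIntegrable (fun q => x * Fq x q) volume 0 p :=
    (continuous_const.mul (Fq_cont hx)).intervalIntegrable _ _
  have := intervalIntegral.integral_eq_sub_of_hasDeriv_right_of_le hp0.le hcont hderiv hint
  rw [this]; norm_num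

lemma muInt_rep (hx : 2 ≤ x) (hp : p ∈ Ioc (0:ℝ) 1) :
    muInt x p = (∫ q in Ioc (0:ℝ) p, x * Fq x q) / p ^ 2 := by
  rw [muInt, if_neg (ne_of_gt hp.1), ftc hx hp.1 hp.2,
    intervalIntegral.integral_of_le hp.1.le]

lemma muInt_nonneg (hx : 2 ≤ x) (hp : p ∈ Icc (0:ℝ) 1) : 0 ≤ muInt x p := by
  rcases eq_or_lt_of_le hp.1 with h | h
  · rw [muInt, if_pos h.symm]; nlinarith
  · rw [muInt_rep hx ⟨h, hp.2⟩]
    apply div_nonneg _ (by positivity)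
    apply setIntegral_nonneg measurableSet_Ioc
    intro q hq
    have := Fq_nonneg hx hq.1.le (le_trans hq.2 hp.2)
    nlinarith

lemma muInt_le (hx : 2 ≤ x) (hp : p ∈ Icc (0:ℝ) 1) : muInt x p ≤ x * (x - 1) / 2 := by
  rcases eq_or_lt_of_le hp.1 with h | h
  · rw [muInt, if_pos h.symm]
  · rw [muInt_rep hx ⟨h, hp.2⟩]
    rw [div_le_iff₀ (by positivity)]
    have hb : (∫ q in Ioc (0:ℝ) p, x * Fq x q) ≤ ∫ q in Ioc (0:ℝ) p, x * ((x-1) * q) := by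
      apply setIntegral_mono_on
      · exact ((continuous_const.mul (Fq_cont hx)).integrableOn_Ioc)
      · exact (continuous_const.mul (continuous_const.mul continuous_id)).integrableOn_Ioc
      · exact measurableSet_Ioc
      · intro q hq
        have := Fq_le_mul hx (le_trans hq.2 hp.2)
        nlinarith
    have hc : (∫ q in Ioc (0:ℝ) p, x * ((x-1) * q)) = x * (x-1) * (p^2/2) := by
      rw [← intervalIntegral.integral_of_le h.le]
      simp only [← mul_assoc]
      rw [intervalIntegral.integral_const_mul, integral_id]
      ring
    calc (∫ q in Ioc (0:ℝ) p, x * Fq x q) ≤ x * (x-1) * (p^2/2) := hb.trans_eq hc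
    _ = x * (x-1)/2 * p^2 := by ring

lemma muInt_meas (hx : 2 ≤ x) : Measurable (muInt x) := by
  apply Measurable.ite (MeasurableSet.singleton 0) measurable_const
  apply Measurable.div _ (by measurability)
  have h : Continuous fun p : ℝ => (1 - p) ^ x :=
    Continuous.rpow_const (by continuity) (fun q => Or.inr (by linarith))
  exact ((measurable_const.mul measurable_id).sub measurable_const).add h.measurable


lemma T_nonneg (y : ℝ) : 0 ≤ T Λ y :=
  setIntegral_nonneg measurableSet_Ioc (fun p _ => by positivity)

lemma T_intOn [IsFiniteMeasure Λ] (hy : 0 < y) :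
    IntegrableOn (fun p => 1 / p ^ 2) (Ioc y 1) Λ := by
  apply Measure.integrableOn_of_bounded (measure_ne_top Λ _)
  · apply Measurable.aestronglyMeasurable
    exact (measurable_const.div (measurable_id.pow_const 2))
  · filter_upwards [ae_restrict_mem measurableSet_Ioc] with p hp
    rw [Real.norm_eq_abs, abs_of_nonneg (by positivity)]
    have h1 : y ^ 2 ≤ p ^ 2 := by nlinarith [hp.1, hp.2]
    exact one_div_le_one_div_of_le (by positivity) h1

lemma Tl_eq [IsFiniteMeasure Λ] (hy : 0 < y) : Tl Λ y = ENNReal.ofReal (T Λ y) := by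
  rw [T, Tl, ofReal_integral_eq_lintegral_ofReal (T_intOn hy)]
  filter_upwards with p using by positivity

lemma T_eq_toReal [IsFiniteMeasure Λ] (hy : 0 < y) : T Λ y = (Tl Λ y).toReal := by
  rw [Tl_eq hy, ENNReal.toReal_ofReal (T_nonneg _)]

lemma Tl_antitone : Antitone (Tl Λ) := fun y y' h =>
  lintegral_mono_set (Ioc_subset_Ioc_left h)

lemma Tlr_meas : Measurable fun y => (Tl Λ y).toReal :=
  (Tl_antitone.measurable).ennreal_toReal

lemma T_mono [IsFiniteMeasure Λ] {y y' : ℝ} (hy : 0 < y) (h : y ≤ y') : T Λ y' ≤ T Λ y := by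
  apply setIntegral_mono_set (T_intOn hy)
  · filter_upwards [ae_restrict_mem measurableSet_Ioc] with p hp using by positivity
  · exact HasSubset.Subset.eventuallyLE (Ioc_subset_Ioc_left h)

noncomputable def fk (x p q : ℝ) : ℝ≥0∞ :=
  (Ioo 0 p).indicator (fun q => ENNReal.ofReal (x * Fq x q / p ^ 2)) q

lemma fk_of_mem {x p q : ℝ} (h : q ∈ Ioo 0 p) :
    fk x p q = ENNReal.ofReal (x * Fq x q / p ^ 2) := by
  rw [fk, indicator_of_mem h]

lemma fk_of_not_mem {x p q : ℝ} (h : q ∉ Ioo 0 p) : fk x p q = 0 := by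
  rw [fk, indicator_of_notMem h]

lemma mu_eq [IsFiniteMeasure Λ] (h0 : Λ {0} = 0) (hx : 2 ≤ x) :
    mu Λ x = ∫ q in Ioc (0:ℝ) 1, x * Fq x q * T Λ q ∧
      IntegrableOn (fun q => x * Fq x q * T Λ q) (Ioc 0 1) volume := by
  have hx0 : (0:ℝ) < x := by linarith
  -- from Icc to Ioc
  have hIccIoc : (Icc (0:ℝ) 1 : Set ℝ) =ᵐ[Λ] Ioc (0:ℝ) 1 := by
    rw [MeasureTheory.ae_eq_set]
    constructor
    · rw [Icc_sdiff_Ioc_same zero_le_one]; exact h0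
    · rw [diff_eq_empty.2 Ioc_subset_Icc_self]; simp
  have hmu1 : mu Λ x = ∫ p in Ioc (0:ℝ) 1, muInt x p ∂Λ :=
    setIntegral_congr_set hIccIoc
  have hInt : IntegrableOn (muInt x) (Icc 0 1) Λ := by
    apply Integrable.mono' (integrable_const (x * (x - 1) / 2))
      ((muInt_meas hx).aestronglyMeasurable)
    filter_upwards [ae_restrict_mem measurableSet_Icc] with p hp
    rw [Real.norm_eq_abs, abs_of_nonneg (muInt_nonneg hx hp)]
    exact muInt_le hx hp
  have hIntIoc : IntegrableOn (muInt x) (Ioc 0 1) Λ := hInt.mono_set Ioc_subset_Icc_self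
  have hnn : 0 ≤ᵐ[Λ.restrict (Ioc 0 1)] muInt x := by
    filter_upwards [ae_restrict_mem measurableSet_Ioc] with p hp
    exact muInt_nonneg hx ⟨hp.1.le, hp.2⟩
  have hA : ENNReal.ofReal (mu Λ x) = ∫⁻ p in Ioc (0:ℝ) 1, ENNReal.ofReal (muInt x p) ∂Λ := by
    rw [hmu1]; exact ofReal_integral_eq_lintegral_ofReal hIntIoc hnn
  have step2 : ∀ p ∈ Ioc (0:ℝ) 1, ENNReal.ofReal (muInt x p)
      = ∫⁻ q in Ioc (0:ℝ) 1, fk x p q := by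
    intro p hp
    have hsub : Ioo 0 p ∩ Ioc 0 1 = Ioo 0 p :=
      inter_eq_left.2 (fun q hq => ⟨hq.1, le_trans hq.2.le hp.2⟩)
    simp only [fk]
    rw [lintegral_indicator measurableSet_Ioo, Measure.restrict_restrict measurableSet_Ioo, hsub]
    rw [← ofReal_integral_eq_lintegral_ofReal]
    · congr 1
      rw [← MeasureTheory.integral_Ioc_eq_integral_Ioo, muInt_rep hx hp, ← integral_div]
    · exact (((continuous_const.mul (Fq_cont hx)).div_const _).integrableOn_Ioc).mono_set
        Ioo_subset_Ioc_self
    · filter_upwards [ae_restrict_mem measurableSet_Ioo] with q hq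
      have h1 := Fq_nonneg hx hq.1.le (le_trans hq.2.le hp.2)
      positivity
  have hmeas : AEMeasurable (Function.uncurry (fk x))
      ((Λ.restrict (Ioc (0:ℝ) 1)).prod (volume.restrict (Ioc (0:ℝ) 1))) := by
    have heq : Function.uncurry (fk x) = Set.indicator {z : ℝ × ℝ | 0 < z.2 ∧ z.2 < z.1}
        (fun z => ENNReal.ofReal (x * Fq x z.2 / z.1 ^ 2)) := by
      ext z
      by_cases h : z.2 ∈ Ioo 0 z.1
      · rw [Function.uncurry, fk_of_mem h, indicator_of_mem (by exact h)]
      · rw [Function.uncurry, fk_of_not_mem h, indicator_of_notMem (by exact h)]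
    rw [heq]
    apply Measurable.aemeasurable
    apply Measurable.indicator
    · apply Measurable.ennreal_ofReal
      apply Measurable.div
      · exact (continuous_const.mul (Fq_cont hx)).measurable.comp measurable_snd
      · exact (measurable_fst.pow_const 2)
    · exact MeasurableSet.inter (measurable_snd measurableSet_Ioi)
        (measurableSet_lt measurable_snd measurable_fst)
  have hswap : ∫⁻ p in Ioc (0:ℝ) 1, (∫⁻ q in Ioc (0:ℝ) 1, fk x p q) ∂Λ
      = ∫⁻ q in Ioc (0:ℝ) 1, (∫⁻ p in Ioc (0:ℝ) 1, fk x p q ∂Λ) :=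
    lintegral_lintegral_swap hmeas
  have step4 : ∀ q ∈ Ioc (0:ℝ) 1, (∫⁻ p in Ioc (0:ℝ) 1, fk x p q ∂Λ)
      = ENNReal.ofReal (x * Fq x q) * Tl Λ q := by
    intro q hq
    have h1 : ∀ p, fk x p q = (Ioi q).indicator
        (fun p => ENNReal.ofReal (x * Fq x q) * ENNReal.ofReal (1 / p ^ 2)) p := by
      intro p
      by_cases h : q < p
      · rw [fk_of_mem (⟨hq.1, h⟩ : q ∈ Ioo 0 p), indicator_of_mem (mem_Ioi.2 h),
          ← ENNReal.ofReal_mul (mul_nonneg hx0.le (Fq_nonneg hx hq.1.le hq.2))]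
        congr 1; ring
      · rw [fk_of_not_mem (fun hmem => h (mem_Ioo.1 hmem).2),
          indicator_of_notMem (by simpa using h)]
    have hsub : Ioi q ∩ Ioc 0 1 = Ioc q 1 := by
      ext p; simp only [mem_inter_iff, mem_Ioi, mem_Ioc]
      exact ⟨fun h => ⟨h.1, h.2.2⟩, fun h => ⟨h.1, lt_trans hq.1 h.1, h.2⟩⟩
    simp_rw [h1]
    rw [lintegral_indicator measurableSet_Ioi, Measure.restrict_restrict measurableSet_Ioi, hsub]
    rw [lintegral_const_mul (f := fun p => ENNReal.ofReal (1/p^2)) _ (by measurability), Tl]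
  have step5 : ENNReal.ofReal (mu Λ x)
      = ∫⁻ q in Ioc (0:ℝ) 1, ENNReal.ofReal (x * Fq x q * T Λ q) := by
    rw [hA, setLIntegral_congr_fun_ae measurableSet_Ioc
      (Filter.Eventually.of_forall step2), hswap,
      setLIntegral_congr_fun_ae measurableSet_Ioc (Filter.Eventually.of_forall step4)]
    apply setLIntegral_congr_fun_ae measurableSet_Ioc
    filter_upwards with q hq
    rw [Tl_eq hq.1, ← ENNReal.ofReal_mul (mul_nonneg hx0.le (Fq_nonneg hx hq.1.le hq.2))]
  -- integrability
  have hgmeas : AEStronglyMeasurable (fun q => x * Fq x q * T Λ q)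
      (volume.restrict (Ioc (0:ℝ) 1)) := by
    apply AEStronglyMeasurable.congr
      (f := fun q => x * Fq x q * (Tl Λ q).toReal)
    · exact (((measurable_const.mul (Fq_cont hx).measurable)).mul Tlr_meas).aestronglyMeasurable
    · filter_upwards [ae_restrict_mem measurableSet_Ioc] with q hq
      rw [← T_eq_toReal hq.1]
  have hgnn : 0 ≤ᵐ[volume.restrict (Ioc (0:ℝ) 1)] fun q => x * Fq x q * T Λ q := by
    filter_upwards [ae_restrict_mem measurableSet_Ioc] with q hq
    exact mul_nonneg (mul_nonneg hx0.le (Fq_nonneg hx hq.1.le hq.2)) (T_nonneg _)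
  have hgint : IntegrableOn (fun q => x * Fq x q * T Λ q) (Ioc 0 1) volume := by
    refine ⟨hgmeas, ?_⟩
    rw [hasFiniteIntegral_iff_ofReal hgnn, ← step5]
    exact ENNReal.ofReal_lt_top
  constructor
  · rw [MeasureTheory.integral_eq_lintegral_of_nonneg_ae hgnn hgmeas, ← step5,
      ENNReal.toReal_ofReal]
    rw [hmu1]
    exact integral_nonneg_of_ae hnn
  · exact hgint

lemma kappa_eq [IsFiniteMeasure Λ] (h0 : Λ {0} = 0) (hx : 2 ≤ x) :
    kappa Λ x = ∫ q in Ioc (0:ℝ) 1, Fq x q * T Λ q := by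
  have hx0 : (0:ℝ) < x := by linarith
  rw [kappa, (mu_eq h0 hx).1]
  simp_rw [mul_assoc]
  rw [MeasureTheory.integral_const_mul, mul_comm, mul_div_assoc, div_self (ne_of_gt hx0), mul_one]


section Asymp

variable {Λ : Measure ℝ} {α β γ : ℝ} {L : ℝ → ℝ}

lemma hS'_of [IsFiniteMeasure Λ] (hL : SlowlyVarying L)
    (htail : Tendsto (fun y => T Λ y / (y ^ (-α) * L (1 / y))) (𝓝[>] (0:ℝ)) (𝓝 1))
    {c : ℝ} (hc : 0 < c) :
    Tendsto (fun x => T Λ (1 / (c * x)) / (x ^ α * L x)) atTop (𝓝 (c ^ α)) := by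
  have h0 : Tendsto (fun x : ℝ => 1 / (c * x)) atTop (𝓝[>] (0:ℝ)) := by
    apply tendsto_nhdsWithin_of_tendsto_nhds_of_eventually_within
    · have h1 : Tendsto (fun x : ℝ => c * x) atTop atTop := Tendsto.const_mul_atTop hc tendsto_id
      exact h1.inv_tendsto_atTop.congr (fun x => (one_div _).symm)
    · filter_upwards [eventually_gt_atTop 0] with x hx
      have hcx : 0 < c * x := by positivity
      exact mem_Ioi.2 (by positivity)
  have hcomp := htail.comp h0
  have h2 : Tendsto (fun x => T Λ (1 / (c * x)) / ((c * x) ^ α * L (c * x))) atTop (𝓝 1) := by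
    apply hcomp.congr'
    filter_upwards [eventually_gt_atTop 0] with x hx
    have hcx : 0 < c * x := by positivity
    simp only [Function.comp]
    rw [one_div_one_div, one_div, inv_rpow hcx.le, ← rpow_neg hcx.le, neg_neg]
  have h3 : Tendsto (fun x => ((c * x) ^ α * L (c * x)) / (x ^ α * L x)) atTop (𝓝 (c ^ α)) := by
    have h4 := (hL.2.2 c hc).const_mul (c ^ α)
    rw [mul_one] at h4
    apply h4.congr'
    filter_upwards [eventually_gt_atTop 0] with x hx
    have hxα : x ^ α ≠ 0 := ne_of_gt (rpow_pos_of_pos hx α)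
    symm
    rw [mul_rpow hc.le hx.le,
      show c ^ α * x ^ α * L (c * x) = x ^ α * (c ^ α * L (c * x)) from by ring,
      mul_div_mul_left _ _ hxα, mul_div_assoc]
  have h5 := h2.mul h3
  rw [one_mul] at h5
  apply h5.congr'
  filter_upwards [eventually_gt_atTop 0] with x hx
  have hcx : 0 < c * x := by positivity
  have hb : (c * x) ^ α * L (c * x) ≠ 0 :=
    ne_of_gt (mul_pos (rpow_pos_of_pos hcx α) (hL.2.1 _ hcx))
  rw [div_mul_div_comm, mul_comm (T Λ (1 / (c * x))) _, mul_div_mul_left _ _ hb]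

lemma exists_X [IsFiniteMeasure Λ] (hL : SlowlyVarying L)
    (htail : Tendsto (fun y => T Λ y / (y ^ (-α) * L (1 / y))) (𝓝[>] (0:ℝ)) (𝓝 1))
    (hβα : β < α) (hαγ : α < γ) :
    ∃ X : ℝ, 2 ≤ X ∧ ∀ x, X ≤ x →
      0 < T Λ (1/x) ∧
      2 ^ β * T Λ (1/x) ≤ T Λ (1/(2*x)) ∧
      T Λ (1/(2*x)) ≤ 2 ^ γ * T Λ (1/x) ∧
      T Λ (1/x) ≤ 2 * (x ^ α * L x) ∧
      x ^ α * L x ≤ 2 * T Λ (1/x) := by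
  have h1 : Tendsto (fun x => T Λ (1/x) / (x ^ α * L x)) atTop (𝓝 1) := by
    have h := hS'_of hL htail one_pos
    rw [Real.one_rpow] at h
    simp only [one_mul] at h
    exact h
  have h2 : Tendsto (fun x => T Λ (1/(2*x)) / (x ^ α * L x)) atTop (𝓝 ((2:ℝ) ^ α)) :=
    hS'_of hL htail two_pos
  have hβα2 : (2:ℝ) ^ β < 2 ^ α := (rpow_lt_rpow_left_iff one_lt_two).2 hβα
  have hαγ2 : (2:ℝ) ^ α < 2 ^ γ := (rpow_lt_rpow_left_iff one_lt_two).2 hαγ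
  have hb0 : (0:ℝ) < 2 ^ β := rpow_pos_of_pos two_pos β
  have hg0 : (0:ℝ) < 2 ^ γ := rpow_pos_of_pos two_pos γ
  set m := ((2:ℝ) ^ β + 2 ^ α)/2 with hm
  set M := ((2:ℝ) ^ α + 2 ^ γ)/2 with hM
  have hmβ : (2:ℝ) ^ β < m := by rw [hm]; linarith
  have hmα : m < (2:ℝ) ^ α := by rw [hm]; linarith
  have hMα : (2:ℝ) ^ α < M := by rw [hM]; linarith
  have hMγ : M < (2:ℝ) ^ γ := by rw [hM]; linarith
  have e1 := h2.eventually_const_le hmα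
  have e2 := h1.eventually_le_const ((one_lt_div hb0).2 hmβ)
  have e3 := h2.eventually_le_const hMα
  have e4 := h1.eventually_const_le ((div_lt_one hg0).2 hMγ)
  have e5 := h1.eventually_const_le (show (1:ℝ)/2 < 1 by norm_num)
  have e6 := h1.eventually_le_const one_lt_two
  obtain ⟨X₀, hX₀⟩ := eventually_atTop.1 (((e1.and e2).and (e3.and e4)).and (e5.and e6))
  refine ⟨max X₀ 2, le_max_right _ _, ?_⟩
  intro x hx
  obtain ⟨⟨⟨E1, E2⟩, ⟨E3, E4⟩⟩, ⟨E5, E6⟩⟩ := hX₀ x (le_trans (le_max_left _ _) hx)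
  have hx0 : (0:ℝ) < x := lt_of_lt_of_le two_pos (le_trans (le_max_right _ _) hx)
  have hD : 0 < x ^ α * L x := mul_pos (rpow_pos_of_pos hx0 α) (hL.2.1 x hx0)
  have hT1 : 1/2 * (x ^ α * L x) ≤ T Λ (1/x) := (le_div_iff₀ hD).1 E5
  have hT2 : T Λ (1/x) ≤ 2 * (x ^ α * L x) := by
    have := (div_le_iff₀ hD).1 E6; linarith
  refine ⟨by linarith, ?_, ?_, hT2, by linarith⟩
  · have hup : T Λ (1/x) ≤ m / 2 ^ β * (x ^ α * L x) := (div_le_iff₀ hD).1 E2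
    have hlo : m * (x ^ α * L x) ≤ T Λ (1/(2*x)) := (le_div_iff₀ hD).1 E1
    calc 2 ^ β * T Λ (1/x) ≤ 2 ^ β * (m / 2 ^ β * (x ^ α * L x)) := by
          apply mul_le_mul_of_nonneg_left hup hb0.le
    _ = m * (x ^ α * L x) := by field_simp
    _ ≤ T Λ (1/(2*x)) := hlo
  · have hup : T Λ (1/(2*x)) ≤ M * (x ^ α * L x) := (div_le_iff₀ hD).1 E3
    have hlo : M / 2 ^ γ * (x ^ α * L x) ≤ T Λ (1/x) := (le_div_iff₀ hD).1 E4
    calc T Λ (1/(2*x)) ≤ M * (x ^ α * L x) := hup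
    _ = 2 ^ γ * (M / 2 ^ γ * (x ^ α * L x)) := by field_simp
    _ ≤ 2 ^ γ * T Λ (1/x) := by apply mul_le_mul_of_nonneg_left hlo hg0.le

lemma iter_low {X : ℝ} (hX : 2 ≤ X) (hβ0 : 0 ≤ β)
    (hdbl : ∀ x, X ≤ x → 2 ^ β * T Λ (1/x) ≤ T Λ (1/(2*x))) :
    ∀ n : ℕ, ∀ x, X ≤ x → (2:ℝ) ^ (β * n) * T Λ (1/x) ≤ T Λ (1/(2^n * x)) := by
  intro n
  induction n with
  | zero => intro x hx; simp
  | succ n ih =>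
    intro x hx
    have hx0 : (0:ℝ) < x := by linarith
    have hx2 : X ≤ 2^n * x := le_trans hx (le_mul_of_one_le_left hx0.le (one_le_pow₀ one_le_two))
    have key := hdbl _ hx2
    have e1 : 2 * (2^n * x) = 2^(n+1) * x := by ring
    rw [e1] at key
    calc (2:ℝ) ^ (β * (n+1:ℕ)) * T Λ (1/x)
        = 2 ^ β * ((2:ℝ) ^ (β * n) * T Λ (1/x)) := by
          rw [← mul_assoc, ← rpow_add two_pos]; push_cast; ring_nf
    _ ≤ 2 ^ β * T Λ (1/(2^n * x)) :=
          mul_le_mul_of_nonneg_left (ih x hx) (rpow_nonneg two_pos.le β)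
    _ ≤ T Λ (1/(2^(n+1) * x)) := key

lemma iter_up {X : ℝ} (hX : 2 ≤ X) (hγ0 : 0 ≤ γ)
    (hdbl : ∀ x, X ≤ x → T Λ (1/(2*x)) ≤ 2 ^ γ * T Λ (1/x)) :
    ∀ n : ℕ, ∀ x, X ≤ x → T Λ (1/(2^n * x)) ≤ (2:ℝ) ^ (γ * n) * T Λ (1/x) := by
  intro n
  induction n with
  | zero => intro x hx; simp
  | succ n ih =>
    intro x hx
    have hx0 : (0:ℝ) < x := by linarith
    have hx2 : X ≤ 2^n * x := le_trans hx (le_mul_of_one_le_left hx0.le (one_le_pow₀ one_le_two))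
    have key := hdbl _ hx2
    have e1 : 2 * (2^n * x) = 2^(n+1) * x := by ring
    rw [e1] at key
    calc T Λ (1/(2^(n+1) * x)) ≤ 2 ^ γ * T Λ (1/(2^n * x)) := key
    _ ≤ 2 ^ γ * ((2:ℝ) ^ (γ * n) * T Λ (1/x)) :=
          mul_le_mul_of_nonneg_left (ih x hx) (rpow_nonneg two_pos.le γ)
    _ = (2:ℝ) ^ (γ * (n+1:ℕ)) * T Λ (1/x) := by
          rw [← mul_assoc, ← rpow_add two_pos]; push_cast; ring_nf

lemma bridge_low [IsFiniteMeasure Λ] {X : ℝ} (hX : 2 ≤ X) (hβ0 : 0 ≤ β)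
    (hiter : ∀ n : ℕ, ∀ x, X ≤ x → (2:ℝ) ^ (β * n) * T Λ (1/x) ≤ T Λ (1/(2^n * x)))
    {t x : ℝ} (ht : X ≤ t) (htx : t ≤ x) :
    (x / (2 * t)) ^ β * T Λ (1/t) ≤ T Λ (1/x) := by
  have ht0 : 0 < t := by linarith
  have hx0 : 0 < x := by linarith
  have hxt1 : 1 ≤ x / t := (one_le_div ht0).2 htx
  set n := ⌊Real.logb 2 (x/t)⌋₊ with hn
  have hlow : (2:ℝ) ^ n ≤ x / t := by
    have h1 : ((n:ℕ):ℝ) ≤ Real.logb 2 (x/t) := Nat.floor_le (Real.logb_nonneg one_lt_two hxt1)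
    calc (2:ℝ) ^ n = (2:ℝ) ^ ((n:ℕ):ℝ) := (rpow_natCast 2 n).symm
    _ ≤ (2:ℝ) ^ Real.logb 2 (x/t) := (rpow_le_rpow_left_iff one_lt_two).2 h1
    _ = x / t := Real.rpow_logb two_pos (by norm_num) (by positivity)
  have hhigh : x / t < (2:ℝ) ^ (n+1) := by
    have h1 : Real.logb 2 (x/t) < ((n:ℕ):ℝ) + 1 := Nat.lt_floor_add_one _
    calc x/t = (2:ℝ) ^ Real.logb 2 (x/t) :=
          (Real.rpow_logb two_pos (by norm_num) (by positivity)).symm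
    _ < (2:ℝ) ^ (((n:ℕ):ℝ) + 1) := (rpow_lt_rpow_left_iff one_lt_two).2 h1
    _ = (2:ℝ) ^ (n+1) := by rw [show (((n:ℕ):ℝ) + 1) = ((n+1 : ℕ):ℝ) from by push_cast; ring,
          rpow_natCast]
  have h2nt : 2^n * t ≤ x := by
    have := (le_div_iff₀ ht0).1 hlow
    linarith
  have h2nt0 : (0:ℝ) < 2^n * t := by positivity
  have hmono : T Λ (1/(2^n * t)) ≤ T Λ (1/x) :=
    T_mono (by positivity) (one_div_le_one_div_of_le h2nt0 h2nt)
  have hpow : (x / (2 * t)) ^ β ≤ (2:ℝ) ^ (β * (n:ℕ)) := by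
    have h1 : x / (2 * t) ≤ (2:ℝ)^n := by
      rw [show x / (2 * t) = x / t / 2 from by ring]
      rw [pow_succ] at hhigh
      linarith
    calc (x / (2 * t)) ^ β ≤ ((2:ℝ)^n) ^ β := rpow_le_rpow (by positivity) h1 hβ0
    _ = (2:ℝ) ^ (β * (n:ℕ)) := by
        rw [← rpow_natCast 2 n, ← rpow_mul two_pos.le, mul_comm]
  calc (x / (2 * t)) ^ β * T Λ (1/t) ≤ (2:ℝ) ^ (β * (n:ℕ)) * T Λ (1/t) :=
        mul_le_mul_of_nonneg_right hpow (T_nonneg _)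
  _ ≤ T Λ (1/(2^n * t)) := hiter n t ht
  _ ≤ T Λ (1/x) := hmono

lemma bridge_up [IsFiniteMeasure Λ] {X : ℝ} (hX : 2 ≤ X) (hγ0 : 0 ≤ γ)
    (hiter : ∀ n : ℕ, ∀ x, X ≤ x → T Λ (1/(2^n * x)) ≤ (2:ℝ) ^ (γ * n) * T Λ (1/x))
    {x s : ℝ} (hx : X ≤ x) (hxs : x ≤ s) :
    T Λ (1/s) ≤ 2 ^ γ * (s/x) ^ γ * T Λ (1/x) := by
  have hx0 : 0 < x := by linarith
  have hs0 : 0 < s := by linarith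
  have hsx1 : 1 ≤ s / x := (one_le_div hx0).2 hxs
  set n := ⌊Real.logb 2 (s/x)⌋₊ with hn
  have hlow : (2:ℝ) ^ n ≤ s / x := by
    have h1 : ((n:ℕ):ℝ) ≤ Real.logb 2 (s/x) := Nat.floor_le (Real.logb_nonneg one_lt_two hsx1)
    calc (2:ℝ) ^ n = (2:ℝ) ^ ((n:ℕ):ℝ) := (rpow_natCast 2 n).symm
    _ ≤ (2:ℝ) ^ Real.logb 2 (s/x) := (rpow_le_rpow_left_iff one_lt_two).2 h1
    _ = s / x := Real.rpow_logb two_pos (by norm_num) (by positivity)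
  have hhigh : s / x < (2:ℝ) ^ (n+1) := by
    have h1 : Real.logb 2 (s/x) < ((n:ℕ):ℝ) + 1 := Nat.lt_floor_add_one _
    calc s/x = (2:ℝ) ^ Real.logb 2 (s/x) :=
          (Real.rpow_logb two_pos (by norm_num) (by positivity)).symm
    _ < (2:ℝ) ^ (((n:ℕ):ℝ) + 1) := (rpow_lt_rpow_left_iff one_lt_two).2 h1
    _ = (2:ℝ) ^ (n+1) := by rw [show (((n:ℕ):ℝ) + 1) = ((n+1 : ℕ):ℝ) from by push_cast; ring,
          rpow_natCast]
  have hsle : s ≤ 2^(n+1) * x := by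
    have := (div_le_iff₀ hx0).1 hhigh.le
    linarith
  have h2n0 : (0:ℝ) < 2^(n+1) * x := by positivity
  have hmono : T Λ (1/s) ≤ T Λ (1/(2^(n+1) * x)) :=
    T_mono (by positivity) (one_div_le_one_div_of_le hs0 hsle)
  have hiter1 := hiter (n+1) x hx
  have hpow : (2:ℝ) ^ (γ * ((n+1:ℕ):ℝ)) ≤ 2 ^ γ * (s/x) ^ γ := by
    have h1 : (2:ℝ) ^ (γ * ((n+1:ℕ):ℝ)) = 2 ^ γ * ((2:ℝ)^n) ^ γ := by
      rw [← rpow_natCast 2 n, ← rpow_mul two_pos.le]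
      rw [← rpow_add two_pos]
      push_cast; ring_nf
    rw [h1]
    apply mul_le_mul_of_nonneg_left _ (rpow_nonneg two_pos.le γ)
    exact rpow_le_rpow (by positivity) hlow hγ0
  calc T Λ (1/s) ≤ T Λ (1/(2^(n+1) * x)) := hmono
  _ ≤ (2:ℝ) ^ (γ * ((n+1:ℕ):ℝ)) * T Λ (1/x) := hiter1
  _ ≤ 2 ^ γ * (s/x) ^ γ * T Λ (1/x) := mul_le_mul_of_nonneg_right hpow (T_nonneg _)

lemma potter [IsFiniteMeasure Λ] (hL : SlowlyVarying L) {X : ℝ} (hX : 2 ≤ X)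
    (hβ0 : 0 < β) (hγ0 : 0 < γ)
    (hP : ∀ x, X ≤ x → 0 < T Λ (1/x) ∧
      2 ^ β * T Λ (1/x) ≤ T Λ (1/(2*x)) ∧
      T Λ (1/(2*x)) ≤ 2 ^ γ * T Λ (1/x) ∧
      T Λ (1/x) ≤ 2 * (x ^ α * L x) ∧
      x ^ α * L x ≤ 2 * T Λ (1/x)) :
    ∀ x, X^2 ≤ x → ∀ u, 0 < u → u ≤ x →
      T Λ (u/x) ≤ (2*2^γ + 2*2^β + 2*(2*X)^β) * (u^(-β) + u^(-γ)) * (x ^ α * L x) := by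
  intro x hx u hu hux
  have hX0 : (0:ℝ) < X := by linarith
  have hXX : X ≤ X^2 := by nlinarith
  have hxX : X ≤ x := le_trans hXX hx
  have hx0 : (0:ℝ) < x := by linarith
  have hD : 0 < x ^ α * L x := mul_pos (rpow_pos_of_pos hx0 α) (hL.2.1 x hx0)
  have hiterlow := iter_low hX hβ0.le (fun y hy => (hP y hy).2.1)
  have hiterup := iter_up hX hγ0.le (fun y hy => (hP y hy).2.2.1)
  have hT2 : T Λ (1/x) ≤ 2 * (x ^ α * L x) := (hP x hxX).2.2.2.1
  have hnnβ : (0:ℝ) ≤ u^(-β) := rpow_nonneg hu.le _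
  have hnnγ : (0:ℝ) ≤ u^(-γ) := rpow_nonneg hu.le _
  have hKβ : (0:ℝ) < 2*2^β := by positivity
  have hKγ : (0:ℝ) < 2*2^γ := by positivity
  have hKX : (0:ℝ) < 2*(2*X)^β := by positivity
  rcases le_or_gt u 1 with hu1 | hu1
  · -- u ≤ 1
    have hs : x ≤ x/u := by
      rw [le_div_iff₀ hu]; nlinarith
    have hb := bridge_up hX hγ0.le hiterup hxX hs
    rw [one_div_div] at hb
    have he2 : (x/u)/x = 1/u := by
      rw [div_div, mul_comm, ← div_div, div_self (ne_of_gt hx0)]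
    rw [he2] at hb
    have he3 : ((1:ℝ)/u)^γ = u^(-γ) := by
      rw [one_div, inv_rpow hu.le, ← rpow_neg hu.le]
    rw [he3] at hb
    calc T Λ (u/x) ≤ 2^γ * u^(-γ) * T Λ (1/x) := hb
    _ ≤ 2^γ * u^(-γ) * (2 * (x ^ α * L x)) := by
        apply mul_le_mul_of_nonneg_left hT2 (by positivity)
    _ = (2*2^γ) * u^(-γ) * (x ^ α * L x) := by ring
    _ ≤ (2*2^γ + 2*2^β + 2*(2*X)^β) * (u^(-β) + u^(-γ)) * (x ^ α * L x) := by
        apply mul_le_mul_of_nonneg_right _ hD.le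
        apply mul_le_mul (by linarith) (le_add_of_nonneg_left hnnβ) hnnγ (by positivity)
  rcases le_or_gt X (x/u) with hXu | hXu
  · -- 1 < u, X ≤ x/u
    have hu0 : (0:ℝ) < u := hu
    have ht1 : x/u ≤ x := div_le_self hx0.le hu1.le
    have hb := bridge_low hX hβ0.le hiterlow hXu ht1
    have he1 : x/(2*(x/u)) = u/2 := by
      field_simp
    have he2 : (1:ℝ)/(x/u) = u/x := one_div_div x u
    rw [he1, he2] at hb
    have hpow : (0:ℝ) < (u/2)^β := rpow_pos_of_pos (by linarith) β
    have hTux : T Λ (u/x) ≤ 2 * (x ^ α * L x) / ((u/2)^β) := by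
      rw [le_div_iff₀ hpow]
      calc T Λ (u/x) * (u/2)^β = (u/2)^β * T Λ (u/x) := mul_comm _ _
      _ ≤ T Λ (1/x) := hb
      _ ≤ 2 * (x ^ α * L x) := hT2
    have hdiv : 2 * (x ^ α * L x) / ((u/2)^β) = (2*2^β) * u^(-β) * (x ^ α * L x) := by
      rw [div_rpow hu.le two_pos.le, rpow_neg hu.le]
      have huβ : (0:ℝ) < u ^ β := rpow_pos_of_pos hu β
      field_simp
    rw [hdiv] at hTux
    calc T Λ (u/x) ≤ (2*2^β) * u^(-β) * (x ^ α * L x) := hTux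
    _ ≤ (2*2^γ + 2*2^β + 2*(2*X)^β) * (u^(-β) + u^(-γ)) * (x ^ α * L x) := by
        apply mul_le_mul_of_nonneg_right _ hD.le
        apply mul_le_mul (by linarith) (le_add_of_nonneg_right hnnγ) hnnβ (by positivity)
  · -- 1 < u, x/u < X
    have hTu : T Λ (u/x) ≤ T Λ (1/X) := by
      apply T_mono (by positivity)
      rw [div_le_div_iff₀ hX0 hx0]
      have := (div_lt_iff₀ hu).1 hXu
      nlinarith
    have hb := bridge_low hX hβ0.le hiterlow (le_refl X) hxX
    have hpow : (0:ℝ) < (x/(2*X))^β := rpow_pos_of_pos (by positivity) β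
    have hT1X : T Λ (1/X) ≤ 2 * (x ^ α * L x) / ((x/(2*X))^β) := by
      rw [le_div_iff₀ hpow]
      calc T Λ (1/X) * (x/(2*X))^β = (x/(2*X))^β * T Λ (1/X) := mul_comm _ _
      _ ≤ T Λ (1/x) := hb
      _ ≤ 2 * (x ^ α * L x) := hT2
    have hdiv : 2 * (x ^ α * L x) / ((x/(2*X))^β) = 2 * (2*X/x)^β * (x ^ α * L x) := by
      rw [div_rpow hx0.le (by positivity), div_rpow (by positivity : (0:ℝ) ≤ 2*X) hx0.le]
      have h1 : (0:ℝ) < x ^ β := rpow_pos_of_pos hx0 β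
      have h2 : (0:ℝ) < (2*X) ^ β := rpow_pos_of_pos (by positivity) β
      field_simp
    have hmon : (2*X/x)^β ≤ (2*X)^β * u^(-β) := by
      have h1 : 2*X/x ≤ 2*X/u := by
        apply div_le_div_of_nonneg_left (by positivity) hu hux
      calc (2*X/x)^β ≤ (2*X/u)^β := rpow_le_rpow (by positivity) h1 hβ0.le
      _ = (2*X)^β * u^(-β) := by
          rw [div_rpow (by positivity : (0:ℝ) ≤ 2*X) hu.le, rpow_neg hu.le, div_eq_mul_inv]
    calc T Λ (u/x) ≤ T Λ (1/X) := hTu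
    _ ≤ 2 * (2*X/x)^β * (x ^ α * L x) := by rw [← hdiv]; exact hT1X
    _ ≤ 2 * ((2*X)^β * u^(-β)) * (x ^ α * L x) := by
        apply mul_le_mul_of_nonneg_right _ hD.le
        apply mul_le_mul_of_nonneg_left hmon two_pos.le
    _ = (2*(2*X)^β) * u^(-β) * (x ^ α * L x) := by ring
    _ ≤ (2*2^γ + 2*2^β + 2*(2*X)^β) * (u^(-β) + u^(-γ)) * (x ^ α * L x) := by
        apply mul_le_mul_of_nonneg_right _ hD.le
        apply mul_le_mul (by linarith) (le_add_of_nonneg_right hnnγ) hnnβ (by positivity)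

end Asymp

lemma exp_integral {u : ℝ} (hu : 0 ≤ u) :
    ∫ t in Ioc (0:ℝ) u, Real.exp (-t) = 1 - Real.exp (-u) := by
  rw [← intervalIntegral.integral_of_le hu,
    intervalIntegral.integral_comp_neg (f := fun t => Real.exp t), _root_.integral_exp]
  norm_num

noncomputable def gg (α u t : ℝ) : ℝ≥0∞ :=
  (Ioc 0 u).indicator (fun t => ENNReal.ofReal (Real.exp (-t) * u ^ (-α))) t

lemma gg_of_mem {α u t : ℝ} (h : t ∈ Ioc 0 u) :
    gg α u t = ENNReal.ofReal (Real.exp (-t) * u ^ (-α)) := by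
  rw [gg, indicator_of_mem h]

lemma gg_of_not_mem {α u t : ℝ} (h : t ∉ Ioc 0 u) : gg α u t = 0 := by
  rw [gg, indicator_of_notMem h]

lemma gamma_lemma (hα1 : 1 < α) (hα2 : α < 2) :
    (∫ u in Ioi (0:ℝ), (1 - Real.exp (-u)) * u ^ (-α))
      = Real.Gamma (2-α) / (α-1) := by
  have hmeas : Measurable fun u : ℝ => (1 - Real.exp (-u)) * u ^ (-α) := by fun_prop
  have hnn : 0 ≤ᵐ[volume.restrict (Ioi (0:ℝ))] fun u => (1 - Real.exp (-u)) * u ^ (-α) := by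
    filter_upwards [ae_restrict_mem measurableSet_Ioi] with u hu
    have h1 : Real.exp (-u) ≤ 1 := Real.exp_le_one_iff.2 (by simp [le_of_lt (mem_Ioi.mp hu)])
    have h2 : (0:ℝ) ≤ u ^ (-α) := rpow_nonneg (le_of_lt hu) _
    show (0:ℝ) ≤ (1 - Real.exp (-u)) * u ^ (-α)
    nlinarith
  -- step 1 : pointwise representation
  have h1 : ∀ u ∈ Ioi (0:ℝ), ENNReal.ofReal ((1 - Real.exp (-u)) * u ^ (-α))
      = ∫⁻ t in Ioi (0:ℝ), gg α u t := by
    intro u hu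
    rw [mem_Ioi] at hu
    have hsub : Ioc 0 u ∩ Ioi 0 = Ioc 0 u := inter_eq_left.2 (fun t ht => ht.1)
    simp only [gg]
    rw [lintegral_indicator measurableSet_Ioc, Measure.restrict_restrict measurableSet_Ioc, hsub]
    have e1 : ∀ t : ℝ, ENNReal.ofReal (Real.exp (-t) * u ^ (-α))
        = ENNReal.ofReal (Real.exp (-t)) * ENNReal.ofReal (u ^ (-α)) := fun t =>
      ENNReal.ofReal_mul (Real.exp_nonneg _)
    simp_rw [e1]
    rw [lintegral_mul_const _ (by fun_prop)]
    rw [← ofReal_integral_eq_lintegral_ofReal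
      (show IntegrableOn (fun t : ℝ => Real.exp (-t)) (Ioc 0 u) volume from
        (Real.continuous_exp.comp continuous_neg).integrableOn_Ioc)
      (Filter.Eventually.of_forall (fun t => Real.exp_nonneg _))]
    rw [exp_integral hu.le, ← ENNReal.ofReal_mul (by
      have := Real.exp_le_one_iff.2 (show -u ≤ 0 by linarith); linarith)]
  -- step 2 : measurability of gg for swap
  have hggmeas : AEMeasurable (Function.uncurry (gg α))
      ((volume.restrict (Ioi (0:ℝ))).prod (volume.restrict (Ioi (0:ℝ)))) := by
    have heq : Function.uncurry (gg α) = Set.indicator {z : ℝ × ℝ | 0 < z.2 ∧ z.2 ≤ z.1}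
        (fun z => ENNReal.ofReal (Real.exp (-z.2) * z.1 ^ (-α))) := by
      ext z
      by_cases h : z.2 ∈ Ioc 0 z.1
      · rw [Function.uncurry, gg_of_mem h, indicator_of_mem (by exact h)]
      · rw [Function.uncurry, gg_of_not_mem h, indicator_of_notMem (by exact h)]
    rw [heq]
    apply Measurable.aemeasurable
    apply Measurable.indicator
    · fun_prop
    · exact MeasurableSet.inter (measurable_snd measurableSet_Ioi)
        (measurableSet_le measurable_snd measurable_fst)
  have hswap := lintegral_lintegral_swap hggmeas
  -- step 3 : inner integral over u
  have h3 : ∀ t ∈ Ioi (0:ℝ), (∫⁻ u in Ioi (0:ℝ), gg α u t)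
      = ENNReal.ofReal (Real.exp (-t) * (t ^ (1-α) / (α-1))) := by
    intro t ht
    rw [mem_Ioi] at ht
    have e1 : ∀ u, gg α u t
        = (Ici t).indicator (fun u => ENNReal.ofReal (Real.exp (-t) * u ^ (-α))) u := by
      intro u
      by_cases h : t ≤ u
      · rw [gg_of_mem (⟨ht, h⟩ : t ∈ Ioc 0 u), indicator_of_mem (mem_Ici.2 h)]
      · rw [gg_of_not_mem (fun hm => h hm.2), indicator_of_notMem (by simpa using h)]
    simp_rw [e1]
    rw [lintegral_indicator measurableSet_Ici, Measure.restrict_restrict measurableSet_Ici,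
      (show Ici t ∩ Ioi 0 = Ici t from inter_eq_left.2 (fun u hu => lt_of_lt_of_le ht hu)),
      ← MeasureTheory.restrict_Ioi_eq_restrict_Ici]
    have e2 : ∀ u : ℝ, ENNReal.ofReal (Real.exp (-t) * u ^ (-α))
        = ENNReal.ofReal (Real.exp (-t)) * ENNReal.ofReal (u ^ (-α)) := fun u =>
      ENNReal.ofReal_mul (Real.exp_nonneg _)
    simp_rw [e2]
    rw [lintegral_const_mul _ (by fun_prop)]
    have e3 : ∫⁻ u in Ioi t, ENNReal.ofReal (u ^ (-α)) = ENNReal.ofReal (t ^ (1-α) / (α-1)) := by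
      rw [← ofReal_integral_eq_lintegral_ofReal
        (integrableOn_Ioi_rpow_of_lt (by linarith) ht)
        (by filter_upwards [ae_restrict_mem measurableSet_Ioi] with u hu using
          rpow_nonneg (le_of_lt (lt_trans ht hu)) _)]
      rw [integral_Ioi_rpow_of_lt (by linarith) ht]
      congr 1
      rw [show -α + 1 = -(α-1) from by ring, show (1:ℝ)-α = -(α-1) from by ring]
      rw [div_neg, neg_div, neg_neg]
    rw [e3, ← ENNReal.ofReal_mul (Real.exp_nonneg _)]
  -- step 4 : outer integral over t
  have h4 : ∫⁻ t in Ioi (0:ℝ), ENNReal.ofReal (Real.exp (-t) * (t ^ (1-α) / (α-1)))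
      = ENNReal.ofReal (Real.Gamma (2-α) / (α-1)) := by
    have hint : IntegrableOn (fun t => Real.exp (-t) * t ^ ((2-α) - 1)) (Ioi (0:ℝ)) volume :=
      Real.GammaIntegral_convergent (by linarith)
    have hint2 : IntegrableOn (fun t => Real.exp (-t) * (t ^ (1-α) / (α-1))) (Ioi (0:ℝ)) volume := by
      have h5 : IntegrableOn (fun t => Real.exp (-t) * t ^ ((2-α)-1) / (α-1)) (Ioi (0:ℝ)) volume :=
        hint.div_const (α-1)
      apply h5.congr_fun _ measurableSet_Ioi
      intro t ht
      rw [show (2-α) - 1 = 1-α from by ring]; ring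
    rw [← ofReal_integral_eq_lintegral_ofReal hint2
      (by filter_upwards [ae_restrict_mem measurableSet_Ioi] with t ht using
        mul_nonneg (Real.exp_nonneg _) (div_nonneg (rpow_nonneg ht.le _) (by linarith)))]
    congr 1
    have e4 : (∫ t in Ioi (0:ℝ), Real.exp (-t) * (t ^ (1-α) / (α-1)))
        = (∫ t in Ioi (0:ℝ), Real.exp (-t) * t ^ ((2-α)-1)) / (α-1) := by
      rw [← integral_div]
      apply setIntegral_congr_fun measurableSet_Ioi
      intro t ht
      rw [show (2-α) - 1 = 1-α from by ring]; ring
    rw [e4, Real.Gamma_eq_integral (by linarith : (0:ℝ) < 2-α)]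
  calc ∫ u in Ioi (0:ℝ), (1 - Real.exp (-u)) * u ^ (-α)
      = (∫⁻ u in Ioi (0:ℝ), ENNReal.ofReal ((1 - Real.exp (-u)) * u ^ (-α))).toReal :=
        MeasureTheory.integral_eq_lintegral_of_nonneg_ae hnn hmeas.aestronglyMeasurable
  _ = (ENNReal.ofReal (Real.Gamma (2-α) / (α-1))).toReal := by
      rw [setLIntegral_congr_fun_ae measurableSet_Ioi (Filter.Eventually.of_forall h1), hswap,
        setLIntegral_congr_fun_ae measurableSet_Ioi (Filter.Eventually.of_forall h3), h4]
  _ = Real.Gamma (2-α) / (α-1) := ENNReal.toReal_ofReal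
        (div_nonneg (Real.Gamma_pos_of_pos (by linarith)).le (by linarith))


noncomputable def Phi (Λ : Measure ℝ) (L : ℝ → ℝ) (α x u : ℝ) : ℝ :=
  ((Ioc (0:ℝ) x).indicator (fun u => Fq x (u/x) * T Λ (u/x)) u) / (x ^ α * L x)

lemma Phi_of_mem {Λ : Measure ℝ} {L : ℝ → ℝ} {α x u : ℝ} (h : u ∈ Ioc (0:ℝ) x) :
    Phi Λ L α x u = Fq x (u/x) * T Λ (u/x) / (x ^ α * L x) := by
  rw [Phi, indicator_of_mem h]

lemma Phi_of_not_mem {Λ : Measure ℝ} {L : ℝ → ℝ} {α x u : ℝ} (h : u ∉ Ioc (0:ℝ) x) :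
    Phi Λ L α x u = 0 := by
  rw [Phi, indicator_of_notMem h, zero_div]

noncomputable def limf (α u : ℝ) : ℝ :=
  (Ioi (0:ℝ)).indicator (fun u => (1 - Real.exp (-u)) * u ^ (-α)) u

noncomputable def bnd (K β γ u : ℝ) : ℝ :=
  (Ioi (0:ℝ)).indicator (fun u => K * (min u 1) * (u^(-β) + u^(-γ))) u

lemma bnd_nonneg {K β γ : ℝ} (hK : 0 < K) (u : ℝ) : 0 ≤ bnd K β γ u := by
  rw [bnd]
  by_cases hu : u ∈ Ioi (0:ℝ)
  · rw [indicator_of_mem hu]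
    rw [mem_Ioi] at hu
    have h1 : (0:ℝ) ≤ min u 1 := le_min hu.le zero_le_one
    have h2 : (0:ℝ) ≤ u^(-β) := rpow_nonneg hu.le _
    have h3 : (0:ℝ) ≤ u^(-γ) := rpow_nonneg hu.le _
    positivity
  · rw [indicator_of_notMem hu]

lemma bnd_integrable {K β γ : ℝ} (hK : 0 < K) (hβ1 : 1 < β) (hβ2 : β < 2)
    (hγ1 : 1 < γ) (hγ2 : γ < 2) : Integrable (bnd K β γ) volume := by
  have hmeas : Measurable fun u : ℝ => K * (min u 1) * (u^(-β) + u^(-γ)) := by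
    apply Measurable.mul
    · exact measurable_const.mul (measurable_id.min measurable_const)
    · fun_prop
  rw [show bnd K β γ = (Ioi (0:ℝ)).indicator
      (fun u => K * (min u 1) * (u^(-β) + u^(-γ))) from rfl,
    integrable_indicator_iff measurableSet_Ioi,
    ← Ioc_union_Ioi_eq_Ioi (zero_le_one : (0:ℝ) ≤ 1)]
  apply MeasureTheory.IntegrableOn.union
  · apply Integrable.mono' (g := fun u => K * (u^(1-β) + u^(1-γ)))
    · apply Integrable.const_mul
      apply Integrable.add
      · exact (intervalIntegrable_iff_integrableOn_Ioc_of_le zero_le_one).1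
          (intervalIntegral.intervalIntegrable_rpow' (by linarith))
      · exact (intervalIntegrable_iff_integrableOn_Ioc_of_le zero_le_one).1
          (intervalIntegral.intervalIntegrable_rpow' (by linarith))
    · exact hmeas.aestronglyMeasurable
    · filter_upwards [ae_restrict_mem measurableSet_Ioc] with u hu
      have hu0 : (0:ℝ) < u := hu.1
      have e1 : u * u^(-β) = u^(1-β) := by
        rw [show (1:ℝ)-β = 1+(-β) from by ring, rpow_add hu0, rpow_one]
      have e2 : u * u^(-γ) = u^(1-γ) := by
        rw [show (1:ℝ)-γ = 1+(-γ) from by ring, rpow_add hu0, rpow_one]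
      have h1 : (0:ℝ) ≤ min u 1 := le_min hu0.le zero_le_one
      have h2 : (0:ℝ) ≤ u^(-β) := rpow_nonneg hu0.le _
      have h3 : (0:ℝ) ≤ u^(-γ) := rpow_nonneg hu0.le _
      rw [Real.norm_eq_abs, abs_of_nonneg (by positivity), min_eq_left hu.2,
        mul_assoc, mul_add, e1, e2]
  · apply Integrable.mono' (g := fun u => K * (u^(-β) + u^(-γ)))
    · exact ((integrableOn_Ioi_rpow_of_lt (by linarith : -β < -1) one_pos).add
        (integrableOn_Ioi_rpow_of_lt (by linarith : -γ < -1) one_pos)).const_mul K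
    · exact hmeas.aestronglyMeasurable
    · filter_upwards [ae_restrict_mem measurableSet_Ioi] with u hu
      rw [mem_Ioi] at hu
      have hu0 : (0:ℝ) < u := lt_trans one_pos hu
      have h1 : (0:ℝ) ≤ min u 1 := le_min hu0.le zero_le_one
      have h2 : (0:ℝ) ≤ u^(-β) := rpow_nonneg hu0.le _
      have h3 : (0:ℝ) ≤ u^(-γ) := rpow_nonneg hu0.le _
      rw [Real.norm_eq_abs, abs_of_nonneg (by positivity), min_eq_right hu.le, mul_one]

end KA

/-- If `Λ` is regularly varying with exponent `α ∈ (1,2)` and slowly varying part `L`,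
then `κ(x) ∼ (Γ(2−α)/(α−1)) x^{α−1} L(x)`, equivalently
`μ(x) ∼ (Γ(2−α)/(α−1)) x^{α} L(x)`, as `x → ∞`. -/
theorem kappa_asymp_regVarying (Λ : Measure ℝ) [IsFiniteMeasure Λ] (hΛ : Λ ≠ 0)
    (hsupp : Λ (Set.Icc (0:ℝ) 1)ᶜ = 0) (α : ℝ) (hα1 : 1 < α) (hα2 : α < 2)
    (L : ℝ → ℝ) (hreg : RegularlyVarying Λ α L) :
    Tendsto (fun x => kappa Λ x / (Real.Gamma (2 - α) / (α - 1) * x ^ (α - 1) * L x))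
      atTop (𝓝 1) ∧
    Tendsto (fun x => mu Λ x / (Real.Gamma (2 - α) / (α - 1) * x ^ α * L x))
      atTop (𝓝 1) := by
  obtain ⟨h0, hL, htail⟩ := hreg
  set β := (1+α)/2 with hβ
  set γ := (2+α)/2 with hγ
  have hβ1 : 1 < β := by rw [hβ]; linarith
  have hβα : β < α := by rw [hβ]; linarith
  have hαγ : α < γ := by rw [hγ]; linarith
  have hγ2 : γ < 2 := by rw [hγ]; linarith
  obtain ⟨X, hX2, hP⟩ := KA.exists_X hL htail hβα hαγ
  have hpotter := KA.potter hL hX2 (by linarith) (by linarith) hP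
  set K := 2*(2:ℝ)^γ + 2*2^β + 2*(2*X)^β with hK
  have hK0 : 0 < K := by rw [hK]; positivity
  have hC0 : 0 < Real.Gamma (2-α) / (α-1) :=
    div_pos (Real.Gamma_pos_of_pos (by linarith)) (by linarith)
  -- Step B1 : substitution identity
  have B1 : ∀ x : ℝ, 2 ≤ x → kappa Λ x / (x ^ (α-1) * L x) = ∫ u, KA.Phi Λ L α x u := by
    intro x hx
    have hx0 : (0:ℝ) < x := by linarith
    have hclaim : ∀ u, (Ioc (0:ℝ) x).indicator (fun u => KA.Fq x (u/x) * T Λ (u/x)) u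
        = (Ioc (0:ℝ) 1).indicator (fun q => KA.Fq x q * T Λ q) (u/x) := by
      intro u
      by_cases hu : u ∈ Ioc (0:ℝ) x
      · rw [indicator_of_mem hu,
          indicator_of_mem (mem_Ioc.mpr ⟨div_pos hu.1 hx0, (div_le_one hx0).2 hu.2⟩)]
      · rw [indicator_of_notMem hu, indicator_of_notMem]
        intro hm
        apply hu
        constructor
        · have h1 := mul_pos hm.1 hx0
          rwa [div_mul_cancel₀ u (ne_of_gt hx0)] at h1
        · exact (div_le_one hx0).1 hm.2
    have e1 : (∫ u, KA.Phi Λ L α x u)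
        = (∫ u, (Ioc (0:ℝ) 1).indicator (fun q => KA.Fq x q * T Λ q) (u/x)) / (x ^ α * L x) := by
      rw [← MeasureTheory.integral_div]
      apply integral_congr_ae
      filter_upwards with u
      rw [KA.Phi, hclaim u]
    have e2 : (∫ u, (Ioc (0:ℝ) 1).indicator (fun q => KA.Fq x q * T Λ q) (u/x))
        = x * ∫ q in Ioc (0:ℝ) 1, KA.Fq x q * T Λ q := by
      rw [MeasureTheory.Measure.integral_comp_div
        (fun y => (Ioc (0:ℝ) 1).indicator (fun q => KA.Fq x q * T Λ q) y) x,
        abs_of_pos hx0, MeasureTheory.integral_indicator measurableSet_Ioc, smul_eq_mul]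
    rw [e1, e2, ← KA.kappa_eq h0 hx]
    have hxa : x ^ α = x ^ (α-1) * x := by
      rw [← Real.rpow_add_one (ne_of_gt hx0) (α-1)]; norm_num
    rw [hxa, show x ^ (α-1) * x * L x = x * (x ^ (α-1) * L x) from by ring,
      mul_div_mul_left _ _ (ne_of_gt hx0)]
  -- measurability
  have hΦmeas : ∀ x : ℝ, 2 ≤ x → AEStronglyMeasurable (KA.Phi Λ L α x) volume := by
    intro x hx
    have hx0 : (0:ℝ) < x := by linarith
    have heq : KA.Phi Λ L α x = fun u => ((Ioc (0:ℝ) x).indicator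
        (fun u => KA.Fq x (u/x) * (KA.Tl Λ (u/x)).toReal) u) / (x ^ α * L x) := by
      funext u
      rw [KA.Phi]
      congr 1
      by_cases hu : u ∈ Ioc (0:ℝ) x
      · rw [indicator_of_mem hu, indicator_of_mem hu, KA.T_eq_toReal (div_pos hu.1 hx0)]
      · rw [indicator_of_notMem hu, indicator_of_notMem hu]
    rw [heq]
    apply Measurable.aestronglyMeasurable
    apply Measurable.div_const
    apply Measurable.indicator _ measurableSet_Ioc
    apply Measurable.mul
    · exact (KA.Fq_cont (by linarith)).measurable.comp (measurable_id.div_const x)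
    · exact KA.Tlr_meas.comp (measurable_id.div_const x)
  -- the bound
  have hB : ∀ᶠ x in atTop, ∀ᵐ u : ℝ, ‖KA.Phi Λ L α x u‖ ≤ KA.bnd K β γ u := by
    filter_upwards [eventually_ge_atTop (max (X^2) 2)] with x hx
    have hx2 : 2 ≤ x := le_trans (le_max_right _ _) hx
    have hxX2 : X^2 ≤ x := le_trans (le_max_left _ _) hx
    have hx0 : (0:ℝ) < x := by linarith
    have hD : 0 < x ^ α * L x := mul_pos (rpow_pos_of_pos hx0 α) (hL.2.1 x hx0)
    filter_upwards with u
    by_cases hu : u ∈ Ioc (0:ℝ) x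
    · have q0 : 0 < u/x := div_pos hu.1 hx0
      have q1 : u/x ≤ 1 := (div_le_one hx0).2 hu.2
      have hF0 : 0 ≤ KA.Fq x (u/x) := KA.Fq_nonneg hx2 q0.le q1
      have hT0 : 0 ≤ T Λ (u/x) := KA.T_nonneg _
      have hFle : KA.Fq x (u/x) ≤ min u 1 := by
        apply le_min _ (KA.Fq_le_one q1)
        have hxu : x * (u/x) = u := by field_simp
        calc KA.Fq x (u/x) ≤ (x-1) * (u/x) := KA.Fq_le_mul hx2 q1
        _ ≤ x * (u/x) := mul_le_mul_of_nonneg_right (by linarith) q0.le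
        _ = u := hxu
      have hTle := hpotter x hxX2 u hu.1 hu.2
      rw [KA.Phi_of_mem hu, Real.norm_eq_abs, abs_of_nonneg (by positivity),
        KA.bnd, indicator_of_mem (mem_Ioi.2 hu.1), div_le_iff₀ hD]
      have hm0 : (0:ℝ) ≤ min u 1 := le_min hu.1.le zero_le_one
      calc KA.Fq x (u/x) * T Λ (u/x)
          ≤ (min u 1) * (K * (u^(-β)+u^(-γ)) * (x ^ α * L x)) :=
            mul_le_mul hFle hTle hT0 hm0
      _ = K * min u 1 * (u^(-β)+u^(-γ)) * (x ^ α * L x) := by ring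
    · rw [KA.Phi_of_not_mem hu, norm_zero]
      exact KA.bnd_nonneg hK0 u
  -- pointwise convergence
  have hpt : ∀ᵐ u : ℝ, Tendsto (fun x => KA.Phi Λ L α x u) atTop (𝓝 (KA.limf α u)) := by
    filter_upwards with u
    rcases le_or_gt u 0 with hu | hu
    · have h1 : ∀ x : ℝ, KA.Phi Λ L α x u = 0 := fun x =>
        KA.Phi_of_not_mem (fun hm => absurd hm.1 (not_lt.2 hu))
      have h2 : KA.limf α u = 0 := by
        rw [KA.limf, indicator_of_notMem (by simpa using hu)]
      rw [h2]
      exact tendsto_const_nhds.congr (fun x => (h1 x).symm)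
    · have hlimu : KA.limf α u = (1 - Real.exp (-u)) * u^(-α) := by
        rw [KA.limf, indicator_of_mem (mem_Ioi.2 hu)]
      rw [hlimu]
      have hA1 : Tendsto (fun x => KA.Fq x (u/x)) atTop (𝓝 (1 - Real.exp (-u))) := by
        have hbase : Tendsto (fun x : ℝ => 1 - u/x) atTop (𝓝 1) := by
          have h2 : Tendsto (fun x : ℝ => u/x) atTop (𝓝 0) := by
            simpa [div_eq_mul_inv] using tendsto_inv_atTop_zero.const_mul u
          simpa using h2.const_sub 1
        have hexp := tendsto_one_add_div_rpow_exp (-u)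
        have hpow : Tendsto (fun x : ℝ => (1 - u/x) ^ (x-1)) atTop (𝓝 (Real.exp (-u))) := by
          have hdiv := hexp.div hbase one_ne_zero
          rw [div_one] at hdiv
          apply hdiv.congr'
          filter_upwards [eventually_gt_atTop (max u 1)] with x hx
          have hxu : u < x := lt_of_le_of_lt (le_max_left u 1) hx
          have hx1 : (1:ℝ) < x := lt_of_le_of_lt (le_max_right u 1) hx
          have hx0 : (0:ℝ) < x := lt_trans one_pos hx1
          have hb : 0 < 1 - u/x := by
            rw [sub_pos, div_lt_one hx0]; exact hxu
          show (1 + -u/x) ^ x / (1 - u/x) = (1 - u/x) ^ (x-1)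
          rw [show (1:ℝ) + -u/x = 1 - u/x from by ring, Real.rpow_sub hb, Real.rpow_one]
        simp only [KA.Fq]
        exact hpow.const_sub 1
      have hA2 : Tendsto (fun x => T Λ (u/x) / (x ^ α * L x)) atTop (𝓝 (u^(-α))) := by
        have h := KA.hS'_of hL htail (inv_pos.2 hu)
        have hval : (u⁻¹) ^ α = u ^ (-α) := by rw [inv_rpow hu.le, ← rpow_neg hu.le]
        rw [hval] at h
        apply h.congr
        intro x
        have he : 1/(u⁻¹ * x) = u/x := by
          rw [one_div, mul_inv_rev, inv_inv, div_eq_mul_inv, mul_comm]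
        rw [he]
      have hprod := hA1.mul hA2
      apply hprod.congr'
      filter_upwards [eventually_gt_atTop (max u 2)] with x hx
      have hxu : u < x := lt_of_le_of_lt (le_max_left u 2) hx
      rw [KA.Phi_of_mem (mem_Ioc.mpr ⟨hu, hxu.le⟩), mul_div_assoc]
  -- dominated convergence
  have B2 : Tendsto (fun x => ∫ u, KA.Phi Λ L α x u) atTop (𝓝 (∫ u, KA.limf α u)) := by
    apply MeasureTheory.tendsto_integral_filter_of_dominated_convergence (KA.bnd K β γ)
    · filter_upwards [eventually_ge_atTop 2] with x hx using hΦmeas x hx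
    · exact hB
    · exact KA.bnd_integrable hK0 hβ1 (by linarith) (by linarith) hγ2
    · exact hpt
  have hlimval : (∫ u, KA.limf α u) = Real.Gamma (2-α) / (α-1) := by
    rw [show KA.limf α = (Ioi (0:ℝ)).indicator (fun u => (1 - Real.exp (-u)) * u ^ (-α)) from rfl,
      MeasureTheory.integral_indicator measurableSet_Ioi, KA.gamma_lemma hα1 hα2]
  have hmain : Tendsto (fun x => kappa Λ x / (x ^ (α-1) * L x)) atTop
      (𝓝 (Real.Gamma (2-α) / (α-1))) := by
    rw [hlimval] at B2
    apply B2.congr'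
    filter_upwards [eventually_ge_atTop 2] with x hx
    exact (B1 x hx).symm
  have t1 : Tendsto (fun x => kappa Λ x / (Real.Gamma (2 - α) / (α - 1) * x ^ (α - 1) * L x))
      atTop (𝓝 1) := by
    have h1 := hmain.div_const (Real.Gamma (2-α) / (α-1))
    rw [div_self (ne_of_gt hC0)] at h1
    apply h1.congr
    intro x
    rw [div_div, show x ^ (α-1) * L x * (Real.Gamma (2-α) / (α-1))
      = Real.Gamma (2-α) / (α-1) * x ^ (α-1) * L x from by ring]
  refine ⟨t1, ?_⟩
  apply t1.congr'
  filter_upwards [eventually_ge_atTop 2] with x hx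
  have hx0 : (0:ℝ) < x := by linarith
  have hmu : mu Λ x = kappa Λ x * x := by
    rw [kappa, div_mul_cancel₀ _ (ne_of_gt hx0)]
  have hxa : x ^ α = x ^ (α-1) * x := by
    rw [← Real.rpow_add_one (ne_of_gt hx0) (α-1)]; norm_num
  rw [hmu, hxa, show Real.Gamma (2-α)/(α-1) * (x ^ (α-1) * x) * L x
    = (Real.Gamma (2-α)/(α-1) * x ^ (α-1) * L x) * x from by ring,
    mul_div_mul_right _ _ (ne_of_gt hx0)]
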